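/- Let X be a σ-β-defavorable space, K a topological space, f : X × K → ℝ a separately continuous map, and φ : K → C_p(X) defined by φ(y)(x) = f(x,y). Suppose there is a sequence (𝒰ₙ)ₙ of countable covers of K which is countably pseudo-complete with respect to φ, i.e., for every choice Fₙ ∈ 𝒰ₙ (n ∈ ℕ) and every sequence (yₙ) ⊆ K with yₙ ∈ ⋂_{i≤n} Fᵢ for all n, the set {φ(yₙ) : n ∈ ℕ} is bounded in C_p(X). Then for every ε > 0 there is a residual subset R_ε of X such that for every (x,y) ∈ R_ε × K there exist a finite sequence of sets Fᵢ ∈ 𝒰ᵢ, i = 0,…,k, with y ∈ ⋂_{i≤k} Fᵢ, and a neighborhood O of (x,y) in X × K such that |f(x,y) − f(x',y')| < ε for every (x',y') ∈ O ∩ (X × ⋂_{i≤k} Fᵢ). -/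

import Mathlib

open Set Topology Filter

namespace SepJoint

/-- The list `[f 0, …, f (n-1)]` of the first `n` values of a sequence. -/
def hist {A : Type*} (f : ℕ → A) (n : ℕ) : List A := List.ofFn (fun i : Fin n => f i)

variable (X : Type*) [TopologicalSpace X]

/-- A strategy for player β in games of type `𝒥` (with points): from the list of α's
previous moves `(Uᵢ, aᵢ)`, produce β's next open set `Vₙ`. -/
abbrev BetaStrategy := List (Set X × X) → Set X

/-- A strategy for player α in games of type `𝒥`: from the list `[V₀, …, Vₙ]` of β's moves
(the last being the one to respond to), produce α's move `(Uₙ, aₙ)`. -/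
abbrev AlphaStrategy := List (Set X) → Set X × X

/-- A strategy for player β in games of type `𝒥*`: from the list of α's previous
moves `Uᵢ`, produce β's next open set `Vₙ`. -/
abbrev BetaStrategyStar := List (Set X) → Set X

/-- A strategy for player α in games of type `𝒥*`. -/
abbrev AlphaStrategyStar := List (Set X) → Set X

variable {X}

/-! ### Games of type `𝒥` (α plays pairs `(Uₙ, aₙ)`) -/

/-- α has played legally against the β-strategy `σ` at all stages `< n`:
each `Uᵢ` is a nonempty open subset of β's move `Vᵢ = σ(history)`. -/
def AlphaLegal (σ : BetaStrategy X) (U : ℕ → Set X) (a : ℕ → X) (n : ℕ) : Prop :=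
  ∀ i < n, IsOpen (U i) ∧ (U i).Nonempty ∧ U i ⊆ σ (hist (fun j => (U j, a j)) i)

/-- `σ` is a legal strategy for β: against any legal finite history it produces a nonempty
open set contained in α's previous move. -/
def BetaLegal (σ : BetaStrategy X) : Prop :=
  ∀ (U : ℕ → Set X) (a : ℕ → X) (n : ℕ), AlphaLegal σ U a n →
    IsOpen (σ (hist (fun j => (U j, a j)) n)) ∧
    (σ (hist (fun j => (U j, a j)) n)).Nonempty ∧
    ∀ m, n = m + 1 → σ (hist (fun j => (U j, a j)) n) ⊆ U m

/-- The winning condition for α in the game `𝒥_Γ` on the play with moves `(Uₙ, aₙ)`: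
for each `g ∈ Γ` there is `t ∈ ⋂ₙ Uₙ` with `g t` in the closure of `{g (aₙ) : n}`. -/
def AlphaWinsGamma (Γ : Set (X → ℝ)) (U : ℕ → Set X) (a : ℕ → X) : Prop :=
  ∀ g ∈ Γ, ∃ t ∈ (⋂ n, U n), g t ∈ closure (Set.range fun n => g (a n))

/-- The winning condition for α in the game `𝒥` on the play with moves `(Uₙ, aₙ)`:
`(⋂ₙ Uₙ) ∩ closure {aₙ : n} ≠ ∅`. -/
def AlphaWinsPlain (U : ℕ → Set X) (a : ℕ → X) : Prop :=
  ((⋂ n, U n) ∩ closure (Set.range a)).Nonempty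

/-- `σ` is a winning strategy for β in the game `𝒥_Γ`. -/
def BetaWinningGamma (Γ : Set (X → ℝ)) (σ : BetaStrategy X) : Prop :=
  BetaLegal σ ∧ ∀ U a, (∀ n, AlphaLegal σ U a n) → ¬ AlphaWinsGamma Γ U a

/-- `σ` is a winning strategy for β in the game `𝒥`. -/
def BetaWinningPlain (σ : BetaStrategy X) : Prop :=
  BetaLegal σ ∧ ∀ U a, (∀ n, AlphaLegal σ U a n) → ¬ AlphaWinsPlain U a

/-- `X` is σ_Γ-β-defavorable: β has no winning strategy in the game `𝒥_Γ`. -/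
def SigmaGammaBetaDefavorable (X : Type*) [TopologicalSpace X] (Γ : Set (X → ℝ)) : Prop :=
  ¬ ∃ σ : BetaStrategy X, BetaWinningGamma Γ σ

/-- `X` is σ-β-defavorable: β has no winning strategy in the game `𝒥`. -/
def SigmaBetaDefavorable (X : Type*) [TopologicalSpace X] : Prop :=
  ¬ ∃ σ : BetaStrategy X, BetaWinningPlain σ

/-- Given the α-strategy `τ` and β's moves `V`, α's `n`-th move `(Uₙ, aₙ) = τ [V₀, …, Vₙ]`. -/
def alphaMove (τ : AlphaStrategy X) (V : ℕ → Set X) (n : ℕ) : Set X × X :=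
  τ (hist V (n + 1))

/-- `τ` is a legal strategy for α: along any legal history of β-moves it answers with a
nonempty open subset of β's last move. -/
def AlphaStratLegal (τ : AlphaStrategy X) : Prop :=
  ∀ (V : ℕ → Set X) (n : ℕ), (IsOpen (V 0) ∧ (V 0).Nonempty) →
    (∀ i < n, IsOpen (V (i + 1)) ∧ (V (i + 1)).Nonempty ∧ V (i + 1) ⊆ (alphaMove τ V i).1) →
    IsOpen (alphaMove τ V n).1 ∧ (alphaMove τ V n).1.Nonempty ∧ (alphaMove τ V n).1 ⊆ V n

/-- `V` is a full run of legal moves of β against the α-strategy `τ`. -/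
def BetaLegalRun (τ : AlphaStrategy X) (V : ℕ → Set X) : Prop :=
  IsOpen (V 0) ∧ (V 0).Nonempty ∧
    ∀ n, IsOpen (V (n + 1)) ∧ (V (n + 1)).Nonempty ∧ V (n + 1) ⊆ (alphaMove τ V n).1

/-- `τ` is a conditionally winning strategy for α in the game `𝒥_Γ`: every compatible play
with `⋂ₙ Uₙ ≠ ∅` fulfils the winning condition for α. -/
def CondAlphaWinningGamma (Γ : Set (X → ℝ)) (τ : AlphaStrategy X) : Prop :=
  AlphaStratLegal τ ∧
    ∀ V, BetaLegalRun τ V → (⋂ n, (alphaMove τ V n).1).Nonempty →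
      AlphaWinsGamma Γ (fun n => (alphaMove τ V n).1) (fun n => (alphaMove τ V n).2)

/-- `X` is conditionally σ_Γ-α-favorable. -/
def CondSigmaGammaAlphaFavorable (X : Type*) [TopologicalSpace X] (Γ : Set (X → ℝ)) : Prop :=
  ∃ τ : AlphaStrategy X, CondAlphaWinningGamma Γ τ

/-- `τ` is a conditionally winning strategy for α in the game `𝒥`. -/
def CondAlphaWinningPlain (τ : AlphaStrategy X) : Prop :=
  AlphaStratLegal τ ∧
    ∀ V, BetaLegalRun τ V → (⋂ n, (alphaMove τ V n).1).Nonempty →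
      AlphaWinsPlain (fun n => (alphaMove τ V n).1) (fun n => (alphaMove τ V n).2)

/-- `X` is conditionally σ-α-favorable. -/
def CondSigmaAlphaFavorable (X : Type*) [TopologicalSpace X] : Prop :=
  ∃ τ : AlphaStrategy X, CondAlphaWinningPlain τ

/-! ### Games of type `𝒥*` (α plays only open sets) -/

/-- α has played legally against the β-strategy `σ` in `𝒥*` at all stages `< n`. -/
def AlphaLegalStar (σ : BetaStrategyStar X) (U : ℕ → Set X) (n : ℕ) : Prop :=
  ∀ i < n, IsOpen (U i) ∧ (U i).Nonempty ∧ U i ⊆ σ (hist U i)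

/-- `σ` is a legal strategy for β in `𝒥*`. -/
def BetaLegalStar (σ : BetaStrategyStar X) : Prop :=
  ∀ (U : ℕ → Set X) (n : ℕ), AlphaLegalStar σ U n →
    IsOpen (σ (hist U n)) ∧ (σ (hist U n)).Nonempty ∧ ∀ m, n = m + 1 → σ (hist U n) ⊆ U m

/-- The winning condition for α in the game `𝒥*_Γ` on the play with α-moves `Uₙ`:
for every sequence `(aₙ)` with `aₙ ∈ Uₙ` and every `g ∈ Γ`, there is `t ∈ ⋂ₙ Uₙ` with
`g t` in the closure of `{g (aₙ) : n}`. -/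
def AlphaWinsStar (Γ : Set (X → ℝ)) (U : ℕ → Set X) : Prop :=
  ∀ a : ℕ → X, (∀ n, a n ∈ U n) → ∀ g ∈ Γ,
    ∃ t ∈ (⋂ n, U n), g t ∈ closure (Set.range fun n => g (a n))

/-- `σ` is a winning strategy for β in the game `𝒥*_Γ`. -/
def BetaWinningStar (Γ : Set (X → ℝ)) (σ : BetaStrategyStar X) : Prop :=
  BetaLegalStar σ ∧ ∀ U, (∀ n, AlphaLegalStar σ U n) → ¬ AlphaWinsStar Γ U

/-- `X` is σ*_Γ-β-defavorable: β has no winning strategy in `𝒥*_Γ`. -/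
def SigmaStarBetaDefavorable (X : Type*) [TopologicalSpace X] (Γ : Set (X → ℝ)) : Prop :=
  ¬ ∃ σ : BetaStrategyStar X, BetaWinningStar Γ σ

/-- Given the α-strategy `τ` and β's moves `V`, α's `n`-th move `Uₙ = τ [V₀, …, Vₙ]` in `𝒥*`. -/
def alphaMoveStar (τ : AlphaStrategyStar X) (V : ℕ → Set X) (n : ℕ) : Set X :=
  τ (hist V (n + 1))

/-- `τ` is a legal strategy for α in `𝒥*`. -/
def AlphaStratLegalStar (τ : AlphaStrategyStar X) : Prop :=
  ∀ (V : ℕ → Set X) (n : ℕ), (IsOpen (V 0) ∧ (V 0).Nonempty) →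
    (∀ i < n, IsOpen (V (i + 1)) ∧ (V (i + 1)).Nonempty ∧ V (i + 1) ⊆ alphaMoveStar τ V i) →
    IsOpen (alphaMoveStar τ V n) ∧ (alphaMoveStar τ V n).Nonempty ∧ alphaMoveStar τ V n ⊆ V n

/-- `V` is a full run of legal moves of β against the α-strategy `τ` in `𝒥*`. -/
def BetaLegalRunStar (τ : AlphaStrategyStar X) (V : ℕ → Set X) : Prop :=
  IsOpen (V 0) ∧ (V 0).Nonempty ∧
    ∀ n, IsOpen (V (n + 1)) ∧ (V (n + 1)).Nonempty ∧ V (n + 1) ⊆ alphaMoveStar τ V n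

/-- `τ` is a winning strategy for α in the game `𝒥*_Γ`. -/
def AlphaWinningStar (Γ : Set (X → ℝ)) (τ : AlphaStrategyStar X) : Prop :=
  AlphaStratLegalStar τ ∧
    ∀ V, BetaLegalRunStar τ V → AlphaWinsStar Γ (fun n => alphaMoveStar τ V n)

/-- `τ` is a conditionally winning strategy for α in the game `𝒥*_Γ`. -/
def CondAlphaWinningStar (Γ : Set (X → ℝ)) (τ : AlphaStrategyStar X) : Prop :=
  AlphaStratLegalStar τ ∧
    ∀ V, BetaLegalRunStar τ V → (⋂ n, alphaMoveStar τ V n).Nonempty →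
      AlphaWinsStar Γ (fun n => alphaMoveStar τ V n)

/-- `X` is σ*_Γ-α-favorable. -/
def SigmaStarAlphaFavorable (X : Type*) [TopologicalSpace X] (Γ : Set (X → ℝ)) : Prop :=
  ∃ τ : AlphaStrategyStar X, AlphaWinningStar Γ τ

/-- `X` is conditionally σ*_Γ-α-favorable. -/
def CondSigmaStarAlphaFavorable (X : Type*) [TopologicalSpace X] (Γ : Set (X → ℝ)) : Prop :=
  ∃ τ : AlphaStrategyStar X, CondAlphaWinningStar Γ τ

/-! ### Auxiliary notions -/

/-- `f : X × K → ℝ` is separately continuous. -/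
def SeparatelyContinuous {K : Type*} [TopologicalSpace K] (f : X × K → ℝ) : Prop :=
  (∀ x, Continuous fun y => f (x, y)) ∧ (∀ y, Continuous fun x => f (x, y))

/-- The map `φ : K → ℝ^X`, `φ(y)(x) = f(x, y)`. -/
def phi {X K : Type*} (f : X × K → ℝ) (y : K) : X → ℝ := fun x => f (x, y)

/-- A sequence `(Wₙ)` of subsets of `K` is countably pair complete with respect to `(φ, Γ)`:
for all sequences `yₙ, zₙ ∈ Wₙ`, the sequence `φ(yₙ) - φ(zₙ)` has a cluster point in `Γ`
(`ℝ^X` carrying the product, i.e. pointwise convergence, topology). -/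
def PairComplete {K : Type*} (f : X × K → ℝ) (Γ : Set (X → ℝ)) (W : ℕ → Set K) : Prop :=
  ∀ y z : ℕ → K, (∀ n, y n ∈ W n) → (∀ n, z n ∈ W n) →
    ∃ g ∈ Γ, MapClusterPt g atTop (fun n => phi f (y n) - phi f (z n))

/-- `f` is ε-continuous at `p`. -/
def EpsCont {K : Type*} [TopologicalSpace K] (f : X × K → ℝ) (ε : ℝ) (p : X × K) : Prop :=
  ∃ O ∈ 𝓝 p, ∀ q ∈ O, |f p - f q| < ε

/-- `Y` is a bounded subset of `Z`: every continuous real-valued function on `Z`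
is bounded on `Y`. -/
def BoundedIn {Z : Type*} [TopologicalSpace Z] (Y : Set Z) : Prop :=
  ∀ g : Z → ℝ, Continuous g → ∃ M, ∀ y ∈ Y, |g y| ≤ M

/-- `Y` is relatively countably compact in `Z`: every sequence in `Y` has a cluster
point in `Z`. -/
def RelCountablyCompact {Z : Type*} [TopologicalSpace Z] (Y : Set Z) : Prop :=
  ∀ u : ℕ → Z, (∀ n, u n ∈ Y) → ∃ z : Z, MapClusterPt z atTop u

/-- `K` is pseudocompact: Tychonoff and every continuous real-valued function is bounded. -/
def Pseudocompact (K : Type*) [TopologicalSpace K] : Prop :=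
  T35Space K ∧ BoundedIn (Set.univ : Set K)

/-- `Y` is Čech-complete: Tychonoff, and there is a sequence of open covers of `Y` which is
complete: any filter base of nonempty closed sets, containing for each `n` a set included
in a member of the `n`-th cover, has nonempty intersection. -/
def CechComplete (Y : Type*) [TopologicalSpace Y] : Prop :=
  T35Space Y ∧ ∃ 𝒰 : ℕ → Set (Set Y),
    (∀ n, ∀ U ∈ 𝒰 n, IsOpen U) ∧ (∀ n, ⋃₀ 𝒰 n = Set.univ) ∧
    ∀ ℱ : Set (Set Y),
      (∀ F ∈ ℱ, IsClosed F) → ℱ.Nonempty → (∀ F ∈ ℱ, F.Nonempty) →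
      (∀ F₁ ∈ ℱ, ∀ F₂ ∈ ℱ, ∃ F₃ ∈ ℱ, F₃ ⊆ F₁ ∩ F₂) →
      (∀ n, ∃ F ∈ ℱ, ∃ U ∈ 𝒰 n, F ⊆ U) →
      (⋂₀ ℱ).Nonempty

/-- `Y` is a p-space: Tychonoff, and there is a sequence `(𝒰ₙ)` of open covers of `Y` such
that each `x ∈ Y` has a sequence `Uₙ ∈ 𝒰ₙ` of members containing it whose intersection is
compact and for which `(⋂_{i ≤ n} Uᵢ)ₙ` is an outer base of `⋂ₙ Uₙ`. -/
def PSpace (Y : Type*) [TopologicalSpace Y] : Prop :=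
  T35Space Y ∧ ∃ 𝒰 : ℕ → Set (Set Y),
    (∀ n, ∀ U ∈ 𝒰 n, IsOpen U) ∧ (∀ n, ⋃₀ 𝒰 n = Set.univ) ∧
    ∀ x : Y, ∃ U : ℕ → Set Y, (∀ n, U n ∈ 𝒰 n) ∧ (∀ n, x ∈ U n) ∧
      IsCompact (⋂ n, U n) ∧
      ∀ W : Set Y, IsOpen W → (⋂ n, U n) ⊆ W → ∃ m, (⋂ i ≤ m, U i) ⊆ W

/-- `X` is a Namioka space: for every compact Hausdorff `K`, every separately continuous
`f : X × K → ℝ` is jointly continuous at each point of `R × K` for some dense `R ⊆ X`. -/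
def NamiokaSpace (X : Type*) [TopologicalSpace X] : Prop :=
  ∀ (K : Type*) [TopologicalSpace K], CompactSpace K → T2Space K →
    ∀ f : X × K → ℝ, SeparatelyContinuous f →
      ∃ R : Set X, Dense R ∧ ∀ x ∈ R, ∀ y : K, ContinuousAt f (x, y)

/-- `A` is C-embedded in `Y`: every continuous real-valued function on `A` extends
continuously to `Y`. -/
def CEmbedded {Y : Type*} [TopologicalSpace Y] (A : Set Y) : Prop :=
  ∀ g : A → ℝ, Continuous g → ∃ G : Y → ℝ, Continuous G ∧ ∀ a : A, G a = g a

/-- `A` is C*-embedded in `Y`: every bounded continuous real-valued function on `A`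
extends continuously to `Y`. -/
def CStarEmbedded {Y : Type*} [TopologicalSpace Y] (A : Set Y) : Prop :=
  ∀ g : A → ℝ, Continuous g → (∃ M, ∀ a, |g a| ≤ M) →
    ∃ G : Y → ℝ, Continuous G ∧ ∀ a : A, G a = g a

/-- The family `F ⊆ ℝ^X` is equicontinuous at `x`. -/
def EquicontAt (F : Set (X → ℝ)) (x : X) : Prop :=
  ∀ ε > 0, ∃ U ∈ 𝓝 x, ∀ y ∈ U, ∀ g ∈ F, |g x - g y| < ε

end SepJoint

namespace SepJointAux
open SepJoint


section Banach

variable {X : Type*} [TopologicalSpace X]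

lemma nonempty_of_not_isMeagre {A : Set X} (h : ¬ IsMeagre A) : A.Nonempty := by
  rcases A.eq_empty_or_nonempty with rfl | hA
  · exact absurd IsMeagre.empty h
  · exact hA

lemma isNowhereDense_mono {s t : Set X} (h : s ⊆ t) (ht : IsNowhereDense t) :
    IsNowhereDense s :=
  eq_empty_of_subset_empty <| ht ▸ interior_mono (closure_mono h)

lemma isMeagre_seq {A : Set X} (h : IsMeagre A) :
    ∃ N : ℕ → Set X, (∀ n, IsNowhereDense (N n)) ∧ A ⊆ ⋃ n, N n := by
  obtain ⟨S, hS, hc, hsub⟩ := isMeagre_iff_countable_union_isNowhereDense.1 h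
  rcases S.eq_empty_or_nonempty with rfl | hne
  · exact ⟨fun _ => ∅, fun _ => isNowhereDense_empty, by simpa using hsub⟩
  · obtain ⟨g, rfl⟩ := Set.Countable.exists_eq_range hc hne
    exact ⟨g, fun n => hS _ ⟨n, rfl⟩, by rwa [sUnion_range] at hsub⟩

lemma isMeagre_of_iUnion_nwd {A : Set X} {N : ℕ → Set X}
    (hN : ∀ n, IsNowhereDense (N n)) (h : A ⊆ ⋃ n, N n) : IsMeagre A :=
  (isMeagre_iff_countable_union_isNowhereDense.2
    ⟨range N, fun _ ⟨n, hn⟩ => hn ▸ hN n, countable_range _, by rwa [sUnion_range]⟩)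

lemma isNowhereDense_frontier_of_isOpen {W : Set X} (hW : IsOpen W) :
    IsNowhereDense (closure W \ W) := by
  rw [IsNowhereDense, eq_empty_iff_forall_notMem]
  intro x hx
  have hcl : closure (closure W \ W) ⊆ closure W :=
    closure_minimal diff_subset isClosed_closure
  have hxW : x ∈ closure W := hcl (interior_subset hx)
  obtain ⟨q, hqO, hqW⟩ :=
    mem_closure_iff.1 hxW _ isOpen_interior hx
  have hq : q ∈ closure (closure W \ W) := interior_subset hqO
  obtain ⟨r, ⟨hr1, hr2⟩, hr3⟩ :=
    mem_closure_iff.1 hq (interior (closure (closure W \ W)) ∩ W)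
      (isOpen_interior.inter hW) ⟨hqO, hqW⟩
  exact hr3.2 hr2

lemma isMeagre_union {s t : Set X} (hs : IsMeagre s) (ht : IsMeagre t) :
    IsMeagre (s ∪ t) := by
  rw [IsMeagre, compl_union]
  exact inter_mem hs ht

lemma banach_category (A : Set X) :
    IsMeagre (A ∩ ⋃₀ {U : Set X | IsOpen U ∧ IsMeagre (A ∩ U)}) := by
  set 𝒞 : Set (Set X) := {U : Set X | IsOpen U ∧ IsMeagre (A ∩ U)} with h𝒞
  obtain ⟨𝒟, h𝒟⟩ := zorn_subset
      {D : Set (Set X) | D ⊆ 𝒞 ∧ (∀ u ∈ D, Set.Nonempty u) ∧ D.PairwiseDisjoint id}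
      (by
        intro c hc hchain
        refine ⟨⋃₀ c, ⟨?_, ?_, ?_⟩, fun s hs => subset_sUnion_of_mem hs⟩
        · exact sUnion_subset fun d hd => (hc hd).1
        · rintro u ⟨d, hd, hu⟩; exact (hc hd).2.1 u hu
        · rintro u ⟨d₁, hd₁, hu⟩ v ⟨d₂, hd₂, hv⟩ huv
          rcases hchain.total hd₁ hd₂ with h | h
          · exact (hc hd₂).2.2 (h hu) hv huv
          · exact (hc hd₁).2.2 hu (h hv) huv)
  obtain ⟨⟨h𝒟sub, h𝒟ne, h𝒟dis⟩, h𝒟max⟩ := h𝒟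
  set W := ⋃₀ 𝒟 with hW
  have hWopen : IsOpen W := isOpen_sUnion fun u hu => (h𝒟sub hu).1
  -- choose nowhere dense coverings
  have h1 : ∀ U ∈ 𝒟, ∃ N : ℕ → Set X,
      (∀ n, IsNowhereDense (N n)) ∧ (∀ n, N n ⊆ U) ∧ A ∩ U ⊆ ⋃ n, N n := by
    intro U hU
    obtain ⟨N, hnwd, hsub⟩ := isMeagre_seq (h𝒟sub hU).2
    exact ⟨fun n => N n ∩ U, fun n => isNowhereDense_mono inter_subset_left (hnwd n),
      fun n => inter_subset_right,
      fun x hx => by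
        obtain ⟨s, ⟨n, rfl⟩, hxs⟩ := hsub ⟨hx.1, hx.2⟩
        exact mem_iUnion.2 ⟨n, hxs, hx.2⟩⟩
  choose! N hnwd hNsub hNcov using h1
  -- each union is nowhere dense
  have hM : ∀ n, IsNowhereDense (⋃ U ∈ 𝒟, N U n) := by
    intro n
    set M := ⋃ U ∈ 𝒟, N U n with hMdef
    rw [IsNowhereDense, eq_empty_iff_forall_notMem]
    intro x hx
    have hxM : x ∈ closure M := interior_subset hx
    obtain ⟨w, hwO, hwM⟩ := mem_closure_iff.1 hxM _ isOpen_interior hx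
    obtain ⟨U, hU, hwN⟩ := mem_iUnion₂.1 hwM
    have hUopen : IsOpen U := (h𝒟sub hU).1
    have key : interior (closure M) ∩ U ⊆ closure (N U n) := by
      rintro q ⟨hqO, hqU⟩
      rw [mem_closure_iff]
      intro O' hO' hqO'
      have hq : q ∈ closure M := interior_subset hqO
      obtain ⟨r, ⟨hr1, hr2⟩, hrM⟩ :=
        mem_closure_iff.1 hq (O' ∩ U) (hO'.inter hUopen) ⟨hqO', hqU⟩
      obtain ⟨U', hU', hrN⟩ := mem_iUnion₂.1 hrM
      have hUU : U' = U := by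
        by_contra hne
        exact (h𝒟dis hU' hU hne).ne_of_mem (hNsub U' hU' n hrN) hr2 rfl
      exact ⟨r, hr1, hUU ▸ hrN⟩
    have hne : (interior (closure M) ∩ U).Nonempty :=
      ⟨w, hwO, hNsub U hU n hwN⟩
    have : interior (closure M) ∩ U ⊆ interior (closure (N U n)) :=
      (isOpen_interior.inter hUopen).subset_interior_iff.2 key
    rw [hnwd U hU n] at this
    exact (hne.mono this).ne_empty rfl
  -- A ∩ W is meagre
  have hAW : IsMeagre (A ∩ W) := by
    refine isMeagre_of_iUnion_nwd hM ?_
    rintro x ⟨hxA, U, hU, hxU⟩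
    obtain ⟨_, ⟨n, rfl⟩, hxn⟩ := hNcov U hU ⟨hxA, hxU⟩
    exact mem_iUnion.2 ⟨n, mem_iUnion₂.2 ⟨U, hU, hxn⟩⟩
  -- density of W in ⋃₀ 𝒞
  have hdense : ⋃₀ 𝒞 ⊆ closure W := by
    rintro x ⟨U, hU, hxU⟩
    by_contra hx
    set O := U ∩ (closure W)ᶜ with hO
    have hOopen : IsOpen O := hU.1.inter isClosed_closure.isOpen_compl
    have hxO : x ∈ O := ⟨hxU, hx⟩
    have hO𝒞 : O ∈ 𝒞 := ⟨hOopen, hU.2.mono (inter_subset_inter_right _ inter_subset_left)⟩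
    have hOdisj : ∀ v ∈ 𝒟, Disjoint O v := by
      intro v hv
      refine disjoint_left.2 fun p hpO hpv => ?_
      exact hpO.2 (subset_closure (mem_sUnion.2 ⟨v, hv, hpv⟩))
    have hmem : insert O 𝒟 ∈
        {D : Set (Set X) | D ⊆ 𝒞 ∧ (∀ u ∈ D, Set.Nonempty u) ∧ D.PairwiseDisjoint id} := by
      refine ⟨insert_subset hO𝒞 h𝒟sub, ?_, ?_⟩
      · rintro u (rfl | hu)
        · exact ⟨x, hxO⟩
        · exact h𝒟ne u hu
      · refine h𝒟dis.insert fun v hv hne => hOdisj v hv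
    have : O ∈ 𝒟 := h𝒟max hmem (subset_insert _ _) (mem_insert _ _)
    exact hxO.2 (subset_closure (mem_sUnion.2 ⟨O, this, hxO⟩))
  -- conclude
  have hsplit : A ∩ ⋃₀ 𝒞 ⊆ (A ∩ W) ∪ (closure W \ W) := by
    rintro x ⟨hxA, hxC⟩
    by_cases hxW : x ∈ W
    · exact Or.inl ⟨hxA, hxW⟩
    · exact Or.inr ⟨hdense hxC, hxW⟩
  have hbd : IsMeagre (closure W \ W) := by
    obtain ⟨Nb, hNb, hNbsub⟩ := isNowhereDense_frontier_of_isOpen hWopen |>.subset_of_closed_isNowhereDense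
    exact isMeagre_of_iUnion_nwd (N := fun _ => Nb) (fun _ => hNbsub.1) (by
      intro x hx; exact mem_iUnion.2 ⟨0, hNb hx⟩)
  exact (isMeagre_union hAW hbd).mono hsplit


lemma exists_open_everywhere_nonmeagre {X : Type*} [TopologicalSpace X] {A : Set X}
    (hA : ¬ IsMeagre A) :
    ∃ V : Set X, IsOpen V ∧ V.Nonempty ∧
      ∀ W, IsOpen W → W.Nonempty → W ⊆ V → ¬ IsMeagre (A ∩ W) := by
  by_contra h
  push_neg at h
  set 𝒞 : Set (Set X) := {U : Set X | IsOpen U ∧ IsMeagre (A ∩ U)} with h𝒞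
  have hnwd : IsNowhereDense (⋃₀ 𝒞)ᶜ := by
    have hcl : IsClosed (⋃₀ 𝒞)ᶜ := (isOpen_sUnion fun u hu => hu.1).isClosed_compl
    rw [hcl.isNowhereDense_iff, eq_empty_iff_forall_notMem]
    intro x hx
    obtain ⟨W, hWo, hWne, hWsub, hWm⟩ :=
      h (interior (⋃₀ 𝒞)ᶜ) isOpen_interior ⟨x, hx⟩
    obtain ⟨w, hw⟩ := hWne
    exact (hWsub.trans interior_subset) hw (mem_sUnion.2 ⟨W, ⟨hWo, hWm⟩, hw⟩)
  have hsplit : A ⊆ (A ∩ ⋃₀ 𝒞) ∪ (⋃₀ 𝒞)ᶜ := by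
    intro x hx
    by_cases hxC : x ∈ ⋃₀ 𝒞
    · exact Or.inl ⟨hx, hxC⟩
    · exact Or.inr hxC
  have hbd : IsMeagre ((⋃₀ 𝒞)ᶜ) := by
    obtain ⟨Nb, hNb, hNbsub⟩ := hnwd.subset_of_closed_isNowhereDense
    refine isMeagre_of_iUnion_nwd (N := fun _ => Nb) (fun _ => hNbsub.1) ?_
    intro x hx; exact mem_iUnion.2 ⟨0, hNb hx⟩
  exact hA ((isMeagre_union (banach_category A) hbd).mono hsplit)

end Banach



lemma exists_tendsto_subseq_of_funcBounded {M : Type*} [TopologicalSpace M]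
    [TopologicalSpace.MetrizableSpace M] (u : ℕ → M)
    (hb : ∀ Ψ : M → ℝ, Continuous Ψ → ∃ C, ∀ n, |Ψ (u n)| ≤ C) :
    ∃ h : M, ∃ ψ : ℕ → ℕ, StrictMono ψ ∧ Tendsto (u ∘ ψ) atTop (𝓝 h) := by
  letI : MetricSpace M := TopologicalSpace.metrizableSpaceMetric M
  suffices hcl : ∃ h : M, MapClusterPt h atTop u by
    obtain ⟨h, hh⟩ := hcl
    obtain ⟨ψ, hψ, hts⟩ := TopologicalSpace.FirstCountableTopology.tendsto_subseq hh
    exact ⟨h, ψ, hψ, hts⟩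
  by_contra hno
  push_neg at hno
  have hfin : ∀ x : M, ∃ V : Set M, IsOpen V ∧ x ∈ V ∧ ∃ N : ℕ, ∀ n ≥ N, u n ∉ V := by
    intro x
    have h1 := hno x
    rw [mapClusterPt_iff_frequently] at h1
    push_neg at h1
    obtain ⟨s, hs, h2⟩ := h1
    obtain ⟨N, hN⟩ := eventually_atTop.1 h2
    exact ⟨interior s, isOpen_interior, mem_interior_iff_mem_nhds.2 hs,
      N, fun n hn hmem => hN n hn (interior_subset hmem)⟩
  set T : Set M := range u with hT
  -- key local finiteness fact
  have hloc : ∀ x : M, ∃ V : Set M, IsOpen V ∧ x ∈ V ∧ (V ∩ T).Finite := by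
    intro x
    obtain ⟨V, hVo, hxV, N, hN⟩ := hfin x
    refine ⟨V, hVo, hxV, ((finite_Iio N).image u).subset ?_⟩
    rintro q ⟨hqV, n, rfl⟩
    exact ⟨n, by by_contra hn; exact hN n (le_of_not_gt hn) hqV, rfl⟩
  have hclosed : IsClosed T := by
    rw [← closure_eq_iff_isClosed, Subset.antisymm_iff]
    refine ⟨fun x hx => ?_, subset_closure⟩
    obtain ⟨V, hVo, hxV, hVfin⟩ := hloc x
    have h1 : x ∈ closure (V ∩ T) := by
      rw [mem_closure_iff]
      intro O hO hxO
      obtain ⟨r, hr1, hr2⟩ := mem_closure_iff.1 hx (O ∩ V) (hO.inter hVo) ⟨hxO, hxV⟩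
      exact ⟨r, hr1.1, hr1.2, hr2⟩
    have := h1
    rw [hVfin.isClosed.closure_eq] at this
    exact this.2
  have hiso : ∀ q : M, q ∈ T → ∃ V : Set M, IsOpen V ∧ q ∈ V ∧ V ∩ T ⊆ {q} := by
    intro q hq
    obtain ⟨V, hVo, hqV, hVfin⟩ := hloc q
    refine ⟨V \ ((V ∩ T) \ {q}), hVo.sdiff ((hVfin.subset diff_subset).isClosed), ⟨hqV, fun h => h.2 rfl⟩, ?_⟩
    rintro p ⟨⟨hpV, hp2⟩, hpT⟩
    by_contra hne
    exact hp2 ⟨⟨hpV, hpT⟩, hne⟩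
  haveI : DiscreteTopology ↥T := by
    refine discreteTopology_iff_isOpen_singleton.mpr fun q => ?_
    obtain ⟨V, hVo, hqV, hVsub⟩ := hiso ↑q q.2
    have : {q} = (Subtype.val : ↥T → M) ⁻¹' V := by
      ext p
      simp only [mem_singleton_iff, mem_preimage]
      constructor
      · rintro rfl; exact hqV
      · intro hp; exact Subtype.ext (hVsub ⟨hp, p.2⟩)
    rw [this]
    exact hVo.preimage continuous_subtype_val
  -- the "index sup" function
  have hBdd : ∀ q : M, q ∈ T → BddAbove {m | u m = q} := by
    intro q hq
    by_contra hbdd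
    have hfreq : ∃ᶠ m in atTop, u m = q := by
      rw [frequently_atTop]
      intro N
      obtain ⟨m, hm1, hm2⟩ := not_bddAbove_iff.1 hbdd N
      exact ⟨m, hm2.le, hm1⟩
    refine hno q (mapClusterPt_iff_frequently.2 fun s hs => ?_)
    exact hfreq.mono fun m hm => hm ▸ mem_of_mem_nhds hs
  set F : ↥T → ℝ := fun q => ((sSup {m | u m = ↑q} : ℕ) : ℝ) with hF
  have hFcont : Continuous F := continuous_of_discreteTopology
  obtain ⟨G, hG⟩ := ContinuousMap.exists_restrict_eq (Y := ℝ) hclosed ⟨F, hFcont⟩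
  obtain ⟨C, hC⟩ := hb G G.continuous
  obtain ⟨n, hn⟩ := exists_nat_gt C
  have h1 : (n : ℝ) ≤ F ⟨u n, ⟨n, rfl⟩⟩ := by
    have : n ≤ sSup {m | u m = u n} := le_csSup (hBdd (u n) ⟨n, rfl⟩) rfl
    simp only [hF]
    exact_mod_cast this
  have h2 : G (u n) = F ⟨u n, ⟨n, rfl⟩⟩ := DFunLike.congr_fun hG ⟨u n, ⟨n, rfl⟩⟩
  have h3 : (n : ℝ) ≤ |G (u n)| := le_trans (h2 ▸ h1) (le_abs_self _)
  exact absurd (le_trans h3 (hC n)) (not_le.2 hn)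


section Game
variable {X K : Type*} [TopologicalSpace X] [TopologicalSpace K]

def BadW (f : X × K → ℝ) (𝒰 : ℕ → ℕ → Set K) (ε : ℝ) (x : X) (y : K) : Prop :=
  ∀ (k : ℕ) (c : ℕ → ℕ), y ∈ (⋂ i ≤ k, 𝒰 i (c i)) →
    ∀ O ∈ 𝓝 ((x, y) : X × K), ∃ p ∈ O, p.2 ∈ (⋂ i ≤ k, 𝒰 i (c i)) ∧ ε ≤ |f (x, y) - f p|

def BSet (f : X × K → ℝ) (𝒰 : ℕ → ℕ → Set K) (ε : ℝ) (lc : List ℕ) : Set X :=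
  {x | ∃ y, BadW f 𝒰 ε x y ∧ ∀ i < lc.length, y ∈ 𝒰 i (lc.getD i 0)}

def GInv (f : X × K → ℝ) (𝒰 : ℕ → ℕ → Set K) (ε : ℝ) (st : Set X × List ℕ) : Prop :=
  IsOpen st.1 ∧ st.1.Nonempty ∧
    ∀ W, IsOpen W → W.Nonempty → W ⊆ st.1 → ¬ IsMeagre (BSet f 𝒰 ε st.2 ∩ W)

def StepP (f : X × K → ℝ) (𝒰 : ℕ → ℕ → Set K) (ε : ℝ) (r : List (Set X × X))
    (lc : List ℕ) (U : Set X) (st : Set X × List ℕ) : Prop :=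
  ∃ c x y z x',
    st.2 = lc ++ [c] ∧ GInv f 𝒰 ε st ∧ st.1 ⊆ U ∧
    (∀ i < st.2.length, y ∈ 𝒰 i (st.2.getD i 0)) ∧
    (∀ i < st.2.length, z ∈ 𝒰 i (st.2.getD i 0)) ∧
    ε ≤ |f (x, y) - f (x', z)| ∧
    (∀ v ∈ st.1, |f (v, y) - f (x, y)| < ε / 8 ∧ |f (v, z) - f (x', z)| < ε / 8) ∧
    (∀ m ∈ r, |f (m.2, z) - f (m.2, y)| < ε / 8)

lemma stepP_inv {f : X × K → ℝ} {𝒰 : ℕ → ℕ → Set K} {ε : ℝ} {r : List (Set X × X)}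
    {lc : List ℕ} {U : Set X} {st : Set X × List ℕ} (h : StepP f 𝒰 ε r lc U st) :
    GInv f 𝒰 ε st := by
  obtain ⟨_, _, _, _, _, _, h, _⟩ := h
  exact h

lemma isOpen_Oy (f : X × K → ℝ) (hf1 : ∀ x : X, Continuous fun y : K => f (x, y))
    (y0 : K) (e : ℝ) (r : List (Set X × X)) :
    IsOpen {w : K | ∀ m ∈ r, |f (m.2, w) - f (m.2, y0)| < e} := by
  induction r with
  | nil => simpa using isOpen_univ
  | cons m rr ih =>
    have heq : {w : K | ∀ m' ∈ m :: rr, |f (m'.2, w) - f (m'.2, y0)| < e} =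
        {w : K | |f (m.2, w) - f (m.2, y0)| < e} ∩
          {w : K | ∀ m' ∈ rr, |f (m'.2, w) - f (m'.2, y0)| < e} := by
      ext w
      simp [List.forall_mem_cons]
    rw [heq]
    exact (isOpen_lt (((hf1 m.2).sub continuous_const).abs) continuous_const).inter ih

lemma step_exists {f : X × K → ℝ} {𝒰 : ℕ → ℕ → Set K} {ε : ℝ}
    (hf : SeparatelyContinuous f) (hcover : ∀ n, (⋃ k, 𝒰 n k) = Set.univ) (hε : 0 < ε)
    (r : List (Set X × X)) (lc : List ℕ) (U : Set X)
    (hU : IsOpen U) (hnm : ¬ IsMeagre (BSet f 𝒰 ε lc ∩ U)) :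
    ∃ st, StepP f 𝒰 ε r lc U st := by
  classical
  have hsub : BSet f 𝒰 ε lc ∩ U ⊆ ⋃ c : ℕ, (BSet f 𝒰 ε (lc ++ [c]) ∩ U) := by
    rintro x ⟨⟨y, hy, hymem⟩, hxU⟩
    have hyu : y ∈ ⋃ k, 𝒰 lc.length k := by rw [hcover]; exact Set.mem_univ y
    obtain ⟨c, hc⟩ := Set.mem_iUnion.1 hyu
    refine Set.mem_iUnion.2 ⟨c, ⟨y, hy, ?_⟩, hxU⟩
    intro i hi
    rw [List.length_append, List.length_singleton] at hi
    rcases Nat.lt_succ_iff_lt_or_eq.1 hi with hi' | rfl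
    · rw [List.getD_append _ _ _ _ hi']
      exact hymem i hi'
    · rw [List.getD_append_right _ _ _ _ le_rfl, Nat.sub_self]
      exact hc
  obtain ⟨c0, hc0⟩ : ∃ c : ℕ, ¬ IsMeagre (BSet f 𝒰 ε (lc ++ [c]) ∩ U) := by
    by_contra hall
    push_neg at hall
    exact hnm ((isMeagre_iUnion hall).mono hsub)
  obtain ⟨Vs, hVso, hVsne, hVs⟩ := exists_open_everywhere_nonmeagre hc0
  have hVinv : ∀ W, IsOpen W → W.Nonempty → W ⊆ Vs ∩ U →
      ¬ IsMeagre (BSet f 𝒰 ε (lc ++ [c0]) ∩ W) := by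
    intro W hWo hWne hWsub
    have h2 := hVs W hWo hWne (hWsub.trans Set.inter_subset_left)
    have h3 : U ∩ W = W := Set.inter_eq_self_of_subset_right (hWsub.trans Set.inter_subset_right)
    rwa [Set.inter_assoc, h3] at h2
  have hVne : (Vs ∩ U).Nonempty := by
    obtain ⟨x, hx⟩ := nonempty_of_not_isMeagre (hVs Vs hVso hVsne Set.Subset.rfl)
    exact ⟨x, hx.2, hx.1.2⟩
  have hV'o : IsOpen (Vs ∩ U) := hVso.inter hU
  obtain ⟨x0, hx0A, hx0V⟩ := nonempty_of_not_isMeagre (hVinv _ hV'o hVne Set.Subset.rfl)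
  obtain ⟨y0, hy0bad, hy0mem⟩ := hx0A
  set Ox := (Vs ∩ U) ∩ {v : X | |f (v, y0) - f (x0, y0)| < ε / 8} with hOx
  have hOxo : IsOpen Ox :=
    hV'o.inter (isOpen_lt (((hf.2 y0).sub continuous_const).abs) continuous_const)
  have hx0Ox : x0 ∈ Ox := ⟨hx0V, by simp only [Set.mem_setOf_eq, sub_self, abs_zero]; positivity⟩
  have hOyo : IsOpen {w : K | ∀ m ∈ r, |f (m.2, w) - f (m.2, y0)| < ε / 8} :=
    isOpen_Oy f hf.1 y0 (ε / 8) r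
  have hy0Oy : y0 ∈ {w : K | ∀ m ∈ r, |f (m.2, w) - f (m.2, y0)| < ε / 8} := by
    intro m _
    simp only [sub_self, abs_zero]
    positivity
  have hkey : y0 ∈ ⋂ i, ⋂ (_ : i ≤ lc.length), 𝒰 i ((lc ++ [c0]).getD i 0) := by
    refine Set.mem_iInter₂.2 fun i hi => hy0mem i ?_
    rw [List.length_append, List.length_singleton]
    omega
  obtain ⟨⟨x1, z0⟩, hpO, hpF, hpd⟩ := hy0bad lc.length (fun i => (lc ++ [c0]).getD i 0) hkey
      (Ox ×ˢ {w : K | ∀ m ∈ r, |f (m.2, w) - f (m.2, y0)| < ε / 8})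
      (prod_mem_nhds (hOxo.mem_nhds hx0Ox) (hOyo.mem_nhds hy0Oy))
  refine ⟨(Ox ∩ {v : X | |f (v, z0) - f (x1, z0)| < ε / 8}, lc ++ [c0]),
    c0, x0, y0, z0, x1, rfl, ⟨?_, ?_, ?_⟩, ?_, ?_, ?_, hpd, ?_, ?_⟩
  · exact hOxo.inter (isOpen_lt (((hf.2 z0).sub continuous_const).abs) continuous_const)
  · exact ⟨x1, hpO.1, by simp only [Set.mem_setOf_eq, sub_self, abs_zero]; positivity⟩
  · intro W hWo hWne hWsub
    exact hVinv W hWo hWne (hWsub.trans ((Set.inter_subset_left).trans Set.inter_subset_left))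
  · intro v hv
    exact hv.1.1.2
  · exact hy0mem
  · intro i hi
    rw [List.length_append, List.length_singleton] at hi
    exact Set.mem_iInter₂.1 hpF i (by omega)
  · intro v hv
    exact ⟨hv.1.2, hv.2⟩
  · intro m hm
    exact hpO.2 m hm

open Classical in
noncomputable def gameState (f : X × K → ℝ) (𝒰 : ℕ → ℕ → Set K) (ε : ℝ)
    (hf : SeparatelyContinuous f) (hcover : ∀ n, (⋃ k, 𝒰 n k) = Set.univ) (hε : 0 < ε)
    (hB : ¬ IsMeagre (BSet f 𝒰 ε [] ∩ Set.univ)) : List (Set X × X) → Set X × List ℕ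
  | [] => (step_exists hf hcover hε [] [] Set.univ isOpen_univ hB).choose
  | m :: rr =>
      if h : IsOpen m.1 ∧
          ¬ IsMeagre (BSet f 𝒰 ε (gameState f 𝒰 ε hf hcover hε hB rr).2 ∩ m.1) then
        (step_exists hf hcover hε (m :: rr) (gameState f 𝒰 ε hf hcover hε hB rr).2 m.1
          h.1 h.2).choose
      else (∅, [])

end Game

end SepJointAux

open SepJoint in
/-- Remark 4.2: `X` σ-β-defavorable and `(𝒰ₙ)` a sequence of countable
covers of `K` which is countably pseudo-complete with respect to `φ`; the conclusion of
Theorem 3.1 holds. -/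
theorem residual_epsilon_continuity_of_pseudoComplete_covers
    {X K : Type*} [TopologicalSpace X] [TopologicalSpace K]
    (hX : SigmaBetaDefavorable X)
    (f : X × K → ℝ) (hf : SeparatelyContinuous f)
    (𝒰 : ℕ → ℕ → Set K) (hcover : ∀ n, (⋃ k, 𝒰 n k) = Set.univ)
    (hpc : ∀ c : ℕ → ℕ, ∀ y : ℕ → K, (∀ n, y n ∈ ⋂ i ≤ n, 𝒰 i (c i)) →
      BoundedIn {h : {g : X → ℝ // Continuous g} | ∃ n, (h : X → ℝ) = phi f (y n)}) :
    ∀ ε : ℝ, 0 < ε → ∃ R ∈ residual X, ∀ x ∈ R, ∀ y : K,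
      ∃ (k : ℕ) (c : ℕ → ℕ), y ∈ (⋂ i ≤ k, 𝒰 i (c i)) ∧
        ∃ O ∈ 𝓝 ((x, y) : X × K), ∀ p ∈ O, p.2 ∈ (⋂ i ≤ k, 𝒰 i (c i)) →
          |f (x, y) - f p| < ε := by
  intro ε hε
  classical
  by_cases hB : IsMeagre (SepJointAux.BSet f 𝒰 ε ([] : List ℕ))
  · -- the good case: the bad set is meagre
    refine ⟨(SepJointAux.BSet f 𝒰 ε ([] : List ℕ))ᶜ, hB, ?_⟩
    intro x hx y
    have hnb : ¬ SepJointAux.BadW f 𝒰 ε x y := by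
      intro hb
      exact hx ⟨y, hb, fun i hi => absurd hi (Nat.not_lt_zero i)⟩
    rw [SepJointAux.BadW] at hnb
    push_neg at hnb
    obtain ⟨k, c, hmem, O, hO, hP⟩ := hnb
    exact ⟨k, c, hmem, O, hO, hP⟩
  · -- otherwise β has a winning strategy, contradiction
    exfalso
    apply hX
    have hB' : ¬ IsMeagre (SepJointAux.BSet f 𝒰 ε ([] : List ℕ) ∩ Set.univ) := by
      rwa [Set.inter_univ]
    set G : List (Set X × X) → Set X × List ℕ :=
      SepJointAux.gameState f 𝒰 ε hf hcover hε hB' with hG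
    set σ : BetaStrategy X := fun l => (G l.reverse).1 with hσ
    -- reversal of histories
    have hista : ∀ (F : ℕ → Set X × X) (n : ℕ),
        (hist F (n + 1)).reverse = F n :: (hist F n).reverse := by
      intro F n
      have h1 : hist F (n + 1) = (hist F n).concat (F n) := by
        rw [hist, List.ofFn_succ']
        simp only [Fin.coe_castSucc, Fin.val_last]
        rfl
      rw [h1, List.concat_eq_append, List.reverse_append]
      simp
    -- the fundamental invariant along legal plays
    have hmain : ∀ (U : ℕ → Set X) (a : ℕ → X) (n : ℕ), AlphaLegal σ U a n →
        SepJointAux.StepP f 𝒰 ε ((hist (fun j => (U j, a j)) n).reverse)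
          (match n with
            | 0 => ([] : List ℕ)
            | m + 1 => (G ((hist (fun j => (U j, a j)) m).reverse)).2)
          (match n with
            | 0 => Set.univ
            | m + 1 => U m)
          (G ((hist (fun j => (U j, a j)) n).reverse)) := by
      intro U a n
      induction n with
      | zero =>
        intro _
        have h0 : (hist (fun j => (U j, a j)) 0).reverse = [] := by
          simp [hist]
        rw [h0]
        exact (SepJointAux.step_exists hf hcover hε [] [] Set.univ isOpen_univ hB').choose_spec
      | succ m ih =>
        intro hA
        have hAm : AlphaLegal σ U a m := fun i hi => hA i (Nat.lt_succ_of_lt hi)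
        have hInv := SepJointAux.stepP_inv (ih hAm)
        have hn := hA m (Nat.lt_succ_self m)
        have hcond : IsOpen (U m) ∧
            ¬ IsMeagre (SepJointAux.BSet f 𝒰 ε
              (G ((hist (fun j => (U j, a j)) m).reverse)).2 ∩ U m) :=
          ⟨hn.1, hInv.2.2 (U m) hn.1 hn.2.1 hn.2.2⟩
        rw [hista (fun j => (U j, a j)) m]
        show SepJointAux.StepP f 𝒰 ε
          ((U m, a m) :: (hist (fun j => (U j, a j)) m).reverse)
          (G ((hist (fun j => (U j, a j)) m).reverse)).2 (U m)
          (G ((U m, a m) :: (hist (fun j => (U j, a j)) m).reverse))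
        have hunfold : G ((U m, a m) :: (hist (fun j => (U j, a j)) m).reverse) =
            (SepJointAux.step_exists hf hcover hε
              ((U m, a m) :: (hist (fun j => (U j, a j)) m).reverse)
              (G ((hist (fun j => (U j, a j)) m).reverse)).2 (U m)
              hcond.1 hcond.2).choose := dif_pos hcond
        rw [hunfold]
        exact (SepJointAux.step_exists hf hcover hε _ _ _ hcond.1 hcond.2).choose_spec
    refine ⟨σ, ⟨?_, ?_⟩⟩
    · -- BetaLegal
      intro U a n hA
      have h1 := SepJointAux.stepP_inv (hmain U a n hA)
      refine ⟨h1.1, h1.2.1, ?_⟩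
      rintro m rfl
      obtain ⟨_, _, _, _, _, _, _, hsub, _⟩ := hmain U a (m + 1) hA
      exact hsub
    · -- β wins every legal play
      intro U a hA hwin
      obtain ⟨t, htI, htc⟩ := hwin
      have htU : ∀ n, t ∈ U n := fun n => Set.mem_iInter.1 htI n
      set St : ℕ → Set X × List ℕ :=
        fun n => G ((hist (fun j => (U j, a j)) n).reverse) with hSt
      have hSP : ∀ n : ℕ, SepJointAux.StepP f 𝒰 ε
          ((hist (fun j => (U j, a j)) n).reverse)
          (match n with
            | 0 => ([] : List ℕ)
            | m + 1 => (St m).2)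
          (match n with
            | 0 => Set.univ
            | m + 1 => U m)
          (St n) := fun n => hmain U a n (hA n)
      simp only [SepJointAux.StepP] at hSP
      choose cc xx yy zz xx' hlc hInv hsubU hymem hzmem hjump hVcon hacon using hSP
      have hlc0 : (St 0).2 = [cc 0] := hlc 0
      have hlc' : ∀ m, (St (m + 1)).2 = (St m).2 ++ [cc (m + 1)] := fun m => hlc (m + 1)
      have hlen : ∀ n, (St n).2.length = n + 1 := by
        intro n
        induction n with
        | zero => rw [hlc0]; rfl
        | succ m ih => rw [hlc' m, List.length_append, ih]; rfl
      set CC : ℕ → ℕ := fun i => (St i).2.getD i 0 with hCC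
      have hcoh : ∀ n i, i ≤ n → (St n).2.getD i 0 = CC i := by
        intro n
        induction n with
        | zero =>
          intro i hi
          have : i = 0 := by omega
          subst this
          rfl
        | succ m ih =>
          intro i hi
          rcases Nat.lt_succ_iff_lt_or_eq.1 (Nat.lt_succ_of_le hi) with hi' | rfl
          · rw [hlc' m, List.getD_append _ _ _ _ (by rw [hlen m]; omega)]
            exact ih i (by omega)
          · rfl
      have hYF : ∀ n, yy n ∈ ⋂ i, ⋂ (_ : i ≤ n), 𝒰 i (CC i) := by
        intro n
        refine Set.mem_iInter₂.2 fun i hi => ?_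
        have h2 := hymem n i (by rw [hlen n]; omega)
        rwa [hcoh n i hi] at h2
      have hZF : ∀ n, zz n ∈ ⋂ i, ⋂ (_ : i ≤ n), 𝒰 i (CC i) := by
        intro n
        refine Set.mem_iInter₂.2 fun i hi => ?_
        have h2 := hzmem n i (by rw [hlen n]; omega)
        rwa [hcoh n i hi] at h2
      have htSt : ∀ n, t ∈ (St n).1 :=
        fun n => (hA (n + 1) n (Nat.lt_succ_self n)).2.2 (htU n)
      have hjt : ∀ n, 3 * ε / 4 ≤ |f (t, yy n) - f (t, zz n)| := by
        intro n
        have h1 := (hVcon n t (htSt n)).1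
        have h2 := (hVcon n t (htSt n)).2
        have h3 := hjump n
        have t1 : |f (xx n, yy n) - f (xx' n, zz n)| ≤
            |f (xx n, yy n) - f (t, yy n)| + |f (t, yy n) - f (t, zz n)| +
              |f (t, zz n) - f (xx' n, zz n)| := by
          have := abs_sub_le (f (xx n, yy n)) (f (t, yy n)) (f (xx' n, zz n))
          have := abs_sub_le (f (t, yy n)) (f (t, zz n)) (f (xx' n, zz n))
          linarith
        have c1 : |f (xx n, yy n) - f (t, yy n)| < ε / 8 := by
          rw [abs_sub_comm]
          exact h1
        linarith
      have hacon2 : ∀ i n, i < n → |f (a i, zz n) - f (a i, yy n)| < ε / 8 := by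
        intro i n hin
        refine hacon n (U i, a i) ?_
        rw [List.mem_reverse, hist, List.mem_ofFn]
        exact ⟨⟨i, hin⟩, rfl⟩
      -- the analytic conclusion
      set Sc : Set X := insert t (Set.range a) with hSc
      have hScnt : Sc.Countable := (Set.countable_range a).insert t
      haveI : Countable ↥Sc := hScnt.to_subtype
      haveI : TopologicalSpace.MetrizableSpace (↥Sc → ℝ) := inferInstance
      haveI : TopologicalSpace.MetrizableSpace {g : ↥Sc → ℝ // Continuous g} :=
        Topology.IsEmbedding.subtypeVal.metrizableSpace
      set resMap : {g : X → ℝ // Continuous g} → {g : ↥Sc → ℝ // Continuous g} :=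
        fun g => ⟨fun s => g.1 s.1, g.2.comp continuous_subtype_val⟩ with hresMap
      have hresc : Continuous resMap := by
        refine Continuous.subtype_mk ?_ _
        exact continuous_pi fun s => (continuous_apply (s.1 : X)).comp continuous_subtype_val
      set u1 : ℕ → {g : ↥Sc → ℝ // Continuous g} :=
        fun n => resMap ⟨phi f (yy n), hf.2 (yy n)⟩ with hu1
      have hbdd1 : ∀ Ψ : {g : ↥Sc → ℝ // Continuous g} → ℝ, Continuous Ψ →
          ∃ C, ∀ n, |Ψ (u1 n)| ≤ C := by
        intro Ψ hΨ
        obtain ⟨C, hC⟩ := hpc CC yy hYF (fun g => Ψ (resMap g)) (hΨ.comp hresc)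
        exact ⟨C, fun n => hC ⟨phi f (yy n), hf.2 (yy n)⟩ ⟨n, rfl⟩⟩
      obtain ⟨h1, ψ1, hψ1, hts1⟩ := SepJointAux.exists_tendsto_subseq_of_funcBounded u1 hbdd1
      set u2 : ℕ → {g : ↥Sc → ℝ // Continuous g} :=
        fun j => resMap ⟨phi f (zz (ψ1 j)), hf.2 (zz (ψ1 j))⟩ with hu2
      have hZF1 : ∀ j, zz (ψ1 j) ∈ ⋂ i, ⋂ (_ : i ≤ j), 𝒰 i (CC i) := by
        intro j
        refine Set.mem_iInter₂.2 fun i hi => ?_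
        exact Set.mem_iInter₂.1 (hZF (ψ1 j)) i (hi.trans (hψ1.le_apply))
      have hbdd2 : ∀ Ψ : {g : ↥Sc → ℝ // Continuous g} → ℝ, Continuous Ψ →
          ∃ C, ∀ n, |Ψ (u2 n)| ≤ C := by
        intro Ψ hΨ
        obtain ⟨C, hC⟩ := hpc CC (fun j => zz (ψ1 j)) hZF1 (fun g => Ψ (resMap g))
          (hΨ.comp hresc)
        exact ⟨C, fun n => hC ⟨phi f (zz (ψ1 n)), hf.2 (zz (ψ1 n))⟩ ⟨n, rfl⟩⟩
      obtain ⟨h2, ψ2, hψ2, hts2⟩ := SepJointAux.exists_tendsto_subseq_of_funcBounded u2 hbdd2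
      set ψ : ℕ → ℕ := ψ1 ∘ ψ2 with hψdef
      have hψ : StrictMono ψ := hψ1.comp hψ2
      have hts1' : Tendsto (fun j => u1 (ψ j)) atTop (𝓝 h1) :=
        hts1.comp hψ2.tendsto_atTop
      have hts2' : Tendsto (fun j => u2 (ψ2 j)) atTop (𝓝 h2) := hts2
      -- pointwise limits
      have hev : ∀ s : ↥Sc, Continuous fun g : {g : ↥Sc → ℝ // Continuous g} => g.1 s :=
        fun s => (continuous_apply s).comp continuous_subtype_val
      set tS : ↥Sc := ⟨t, Set.mem_insert t _⟩ with htS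
      set aS : ℕ → ↥Sc := fun i => ⟨a i, Set.mem_insert_of_mem _ (Set.mem_range_self i)⟩
        with haS
      have hpt1 : ∀ s : ↥Sc, Tendsto (fun j => f (s.1, yy (ψ j))) atTop (𝓝 (h1.1 s)) :=
        fun s => ((hev s).tendsto h1).comp hts1'
      have hpt2 : ∀ s : ↥Sc, Tendsto (fun j => f (s.1, zz (ψ j))) atTop (𝓝 (h2.1 s)) :=
        fun s => ((hev s).tendsto h2).comp hts2'
      have key1 : 3 * ε / 4 ≤ |h1.1 tS - h2.1 tS| := by
        have hd : Tendsto (fun j => |f (t, yy (ψ j)) - f (t, zz (ψ j))|) atTop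
            (𝓝 |h1.1 tS - h2.1 tS|) := ((hpt1 tS).sub (hpt2 tS)).abs
        exact ge_of_tendsto hd (Eventually.of_forall fun j => hjt (ψ j))
      have key2 : ∀ i, |h1.1 (aS i) - h2.1 (aS i)| ≤ ε / 8 := by
        intro i
        have hd : Tendsto (fun j => |f (a i, yy (ψ j)) - f (a i, zz (ψ j))|) atTop
            (𝓝 |h1.1 (aS i) - h2.1 (aS i)|) := ((hpt1 (aS i)).sub (hpt2 (aS i))).abs
        refine le_of_tendsto hd ?_
        filter_upwards [eventually_ge_atTop (i + 1)] with j hj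
        have hlt : i < ψ j := lt_of_lt_of_le (Nat.lt_of_succ_le hj) (hψ.le_apply)
        have := hacon2 i (ψ j) hlt
        rw [abs_sub_comm] at this
        exact this.le
      have htclS : tS ∈ closure (Set.range aS) := by
        rw [closure_subtype]
        have himg : Subtype.val '' Set.range aS = Set.range a := by
          rw [← Set.range_comp]
          rfl
        rw [himg]
        exact htc
      have hWo : IsOpen {s : ↥Sc | |h1.1 s - h1.1 tS| < ε / 8 ∧ |h2.1 s - h2.1 tS| < ε / 8} := by
        refine IsOpen.inter ?_ ?_
        · exact isOpen_lt ((h1.2.sub continuous_const).abs) continuous_const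
        · exact isOpen_lt ((h2.2.sub continuous_const).abs) continuous_const
      have htSW : tS ∈ {s : ↥Sc | |h1.1 s - h1.1 tS| < ε / 8 ∧ |h2.1 s - h2.1 tS| < ε / 8} := by
        constructor <;> (simp only [Set.mem_setOf_eq, sub_self, abs_zero]; positivity)
      obtain ⟨q, hqW, hqr⟩ := mem_closure_iff.1 htclS _ hWo htSW
      obtain ⟨i, rfl⟩ := hqr
      have e1 : |h1.1 (aS i) - h1.1 tS| < ε / 8 := hqW.1
      have e2 : |h2.1 (aS i) - h2.1 tS| < ε / 8 := hqW.2
      have e3 := key2 i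
      have efin : |h1.1 tS - h2.1 tS| ≤
          |h1.1 (aS i) - h1.1 tS| + |h1.1 (aS i) - h2.1 (aS i)| + |h2.1 (aS i) - h2.1 tS| := by
        have u1 := abs_sub_le (h1.1 tS) (h1.1 (aS i)) (h2.1 tS)
        have u2 := abs_sub_le (h1.1 (aS i)) (h2.1 (aS i)) (h2.1 tS)
        have u3 : |h1.1 tS - h1.1 (aS i)| = |h1.1 (aS i) - h1.1 tS| := abs_sub_comm _ _
        linarith
      linarith [key1]
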